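/- In the algebra N ⊆ UT_6(F) with the reflection involution θ_6, the product [A_1, A_2][A_3, A_4][A_5, A_6] is central in N for all symmetric elements A_1,...,A_6 of (N, θ_6), and there is a choice of symmetric elements making this product equal to the nonzero central element e_{16}. In particular [x_1^+,x_2^+][x_3^+,x_4^+][x_5^+,x_6^+] is a proper central *-polynomial for (N, θ_6). -/

import Mathlib

open Matrix

/-- The reflection involution `θ_6` on `M_6(F)`. -/
def reflInv {F : Type*} [Field F] (A : Matrix (Fin 6) (Fin 6) F) :
    Matrix (Fin 6) (Fin 6) F :=
  Matrix.of fun i j => A j.rev i.rev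

/-- Membership in the algebra `N ⊆ UT_6(F)`. -/
def memN {F : Type*} [Field F] (M : Matrix (Fin 6) (Fin 6) F) : Prop :=
  (∀ i j : Fin 6, j < i → M i j = 0) ∧
  M 0 0 = M 5 5 ∧ M 1 1 = M 4 4 ∧ M 2 2 = M 3 3 ∧
  M 1 3 = 0 ∧ M 1 4 = 0 ∧ M 2 3 = 0 ∧ M 2 4 = 0

def okS (i j : Fin 6) : Prop :=
  i < j ∧ ¬((i = 1 ∧ j = 3) ∨ (i = 1 ∧ j = 4) ∨ (i = 2 ∧ j = 3) ∨ (i = 2 ∧ j = 4))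

instance (i j : Fin 6) : Decidable (okS i j) := by unfold okS; infer_instance

lemma okS_chain : ∀ i k l j : Fin 6, okS i k → okS k l → okS l j → i = 0 ∧ j = 5 := by decide

lemma comm_ok {F : Type*} [Field F] {A B : Matrix (Fin 6) (Fin 6) F}
    (hA : memN A) (hB : memN B) : ∀ i j : Fin 6, ¬ okS i j → (A * B - B * A) i j = 0 := by
  obtain ⟨tA, dA1, dA2, dA3, zA1, zA2, zA3, zA4⟩ := hA
  obtain ⟨tB, dB1, dB2, dB3, zB1, zB2, zB3, zB4⟩ := hB
  have a10 : A 1 0 = 0 := tA 1 0 (by decide)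
  have a20 : A 2 0 = 0 := tA 2 0 (by decide)
  have a21 : A 2 1 = 0 := tA 2 1 (by decide)
  have a30 : A 3 0 = 0 := tA 3 0 (by decide)
  have a31 : A 3 1 = 0 := tA 3 1 (by decide)
  have a32 : A 3 2 = 0 := tA 3 2 (by decide)
  have a40 : A 4 0 = 0 := tA 4 0 (by decide)
  have a41 : A 4 1 = 0 := tA 4 1 (by decide)
  have a42 : A 4 2 = 0 := tA 4 2 (by decide)
  have a43 : A 4 3 = 0 := tA 4 3 (by decide)
  have a50 : A 5 0 = 0 := tA 5 0 (by decide)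
  have a51 : A 5 1 = 0 := tA 5 1 (by decide)
  have a52 : A 5 2 = 0 := tA 5 2 (by decide)
  have a53 : A 5 3 = 0 := tA 5 3 (by decide)
  have a54 : A 5 4 = 0 := tA 5 4 (by decide)
  have b10 : B 1 0 = 0 := tB 1 0 (by decide)
  have b20 : B 2 0 = 0 := tB 2 0 (by decide)
  have b21 : B 2 1 = 0 := tB 2 1 (by decide)
  have b30 : B 3 0 = 0 := tB 3 0 (by decide)
  have b31 : B 3 1 = 0 := tB 3 1 (by decide)
  have b32 : B 3 2 = 0 := tB 3 2 (by decide)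
  have b40 : B 4 0 = 0 := tB 4 0 (by decide)
  have b41 : B 4 1 = 0 := tB 4 1 (by decide)
  have b42 : B 4 2 = 0 := tB 4 2 (by decide)
  have b43 : B 4 3 = 0 := tB 4 3 (by decide)
  have b50 : B 5 0 = 0 := tB 5 0 (by decide)
  have b51 : B 5 1 = 0 := tB 5 1 (by decide)
  have b52 : B 5 2 = 0 := tB 5 2 (by decide)
  have b53 : B 5 3 = 0 := tB 5 3 (by decide)
  have b54 : B 5 4 = 0 := tB 5 4 (by decide)
  have hz00 : (A * B - B * A) (0 : Fin 6) (0 : Fin 6) = 0 := by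
    simp only [Matrix.sub_apply, Matrix.mul_apply, Fin.sum_univ_six]
    simp only [a10, a20, a21, a30, a31, a32, a40, a41, a42, a43, a50, a51, a52, a53, a54, b10, b20, b21, b30, b31, b32, b40, b41, b42, b43, b50, b51, b52, b53, b54, zA1, zA2, zA3, zA4, zB1, zB2, zB3, zB4,
      zero_mul, mul_zero, add_zero, zero_add]
    ring
  have hz10 : (A * B - B * A) (1 : Fin 6) (0 : Fin 6) = 0 := by
    simp only [Matrix.sub_apply, Matrix.mul_apply, Fin.sum_univ_six]
    simp only [a10, a20, a21, a30, a31, a32, a40, a41, a42, a43, a50, a51, a52, a53, a54, b10, b20, b21, b30, b31, b32, b40, b41, b42, b43, b50, b51, b52, b53, b54, zA1, zA2, zA3, zA4, zB1, zB2, zB3, zB4,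
      zero_mul, mul_zero, add_zero, zero_add]
    ring
  have hz11 : (A * B - B * A) (1 : Fin 6) (1 : Fin 6) = 0 := by
    simp only [Matrix.sub_apply, Matrix.mul_apply, Fin.sum_univ_six]
    simp only [a10, a20, a21, a30, a31, a32, a40, a41, a42, a43, a50, a51, a52, a53, a54, b10, b20, b21, b30, b31, b32, b40, b41, b42, b43, b50, b51, b52, b53, b54, zA1, zA2, zA3, zA4, zB1, zB2, zB3, zB4,
      zero_mul, mul_zero, add_zero, zero_add]
    ring
  have hz13 : (A * B - B * A) (1 : Fin 6) (3 : Fin 6) = 0 := by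
    simp only [Matrix.sub_apply, Matrix.mul_apply, Fin.sum_univ_six]
    simp only [a10, a20, a21, a30, a31, a32, a40, a41, a42, a43, a50, a51, a52, a53, a54, b10, b20, b21, b30, b31, b32, b40, b41, b42, b43, b50, b51, b52, b53, b54, zA1, zA2, zA3, zA4, zB1, zB2, zB3, zB4,
      zero_mul, mul_zero, add_zero, zero_add]
    ring
  have hz14 : (A * B - B * A) (1 : Fin 6) (4 : Fin 6) = 0 := by
    simp only [Matrix.sub_apply, Matrix.mul_apply, Fin.sum_univ_six]
    simp only [a10, a20, a21, a30, a31, a32, a40, a41, a42, a43, a50, a51, a52, a53, a54, b10, b20, b21, b30, b31, b32, b40, b41, b42, b43, b50, b51, b52, b53, b54, zA1, zA2, zA3, zA4, zB1, zB2, zB3, zB4,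
      zero_mul, mul_zero, add_zero, zero_add]
    ring
  have hz20 : (A * B - B * A) (2 : Fin 6) (0 : Fin 6) = 0 := by
    simp only [Matrix.sub_apply, Matrix.mul_apply, Fin.sum_univ_six]
    simp only [a10, a20, a21, a30, a31, a32, a40, a41, a42, a43, a50, a51, a52, a53, a54, b10, b20, b21, b30, b31, b32, b40, b41, b42, b43, b50, b51, b52, b53, b54, zA1, zA2, zA3, zA4, zB1, zB2, zB3, zB4,
      zero_mul, mul_zero, add_zero, zero_add]
    ring
  have hz21 : (A * B - B * A) (2 : Fin 6) (1 : Fin 6) = 0 := by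
    simp only [Matrix.sub_apply, Matrix.mul_apply, Fin.sum_univ_six]
    simp only [a10, a20, a21, a30, a31, a32, a40, a41, a42, a43, a50, a51, a52, a53, a54, b10, b20, b21, b30, b31, b32, b40, b41, b42, b43, b50, b51, b52, b53, b54, zA1, zA2, zA3, zA4, zB1, zB2, zB3, zB4,
      zero_mul, mul_zero, add_zero, zero_add]
    ring
  have hz22 : (A * B - B * A) (2 : Fin 6) (2 : Fin 6) = 0 := by
    simp only [Matrix.sub_apply, Matrix.mul_apply, Fin.sum_univ_six]
    simp only [a10, a20, a21, a30, a31, a32, a40, a41, a42, a43, a50, a51, a52, a53, a54, b10, b20, b21, b30, b31, b32, b40, b41, b42, b43, b50, b51, b52, b53, b54, zA1, zA2, zA3, zA4, zB1, zB2, zB3, zB4,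
      zero_mul, mul_zero, add_zero, zero_add]
    ring
  have hz23 : (A * B - B * A) (2 : Fin 6) (3 : Fin 6) = 0 := by
    simp only [Matrix.sub_apply, Matrix.mul_apply, Fin.sum_univ_six]
    simp only [a10, a20, a21, a30, a31, a32, a40, a41, a42, a43, a50, a51, a52, a53, a54, b10, b20, b21, b30, b31, b32, b40, b41, b42, b43, b50, b51, b52, b53, b54, zA1, zA2, zA3, zA4, zB1, zB2, zB3, zB4,
      zero_mul, mul_zero, add_zero, zero_add]
    ring
  have hz24 : (A * B - B * A) (2 : Fin 6) (4 : Fin 6) = 0 := by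
    simp only [Matrix.sub_apply, Matrix.mul_apply, Fin.sum_univ_six]
    simp only [a10, a20, a21, a30, a31, a32, a40, a41, a42, a43, a50, a51, a52, a53, a54, b10, b20, b21, b30, b31, b32, b40, b41, b42, b43, b50, b51, b52, b53, b54, zA1, zA2, zA3, zA4, zB1, zB2, zB3, zB4,
      zero_mul, mul_zero, add_zero, zero_add]
    ring
  have hz30 : (A * B - B * A) (3 : Fin 6) (0 : Fin 6) = 0 := by
    simp only [Matrix.sub_apply, Matrix.mul_apply, Fin.sum_univ_six]
    simp only [a10, a20, a21, a30, a31, a32, a40, a41, a42, a43, a50, a51, a52, a53, a54, b10, b20, b21, b30, b31, b32, b40, b41, b42, b43, b50, b51, b52, b53, b54, zA1, zA2, zA3, zA4, zB1, zB2, zB3, zB4,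
      zero_mul, mul_zero, add_zero, zero_add]
    ring
  have hz31 : (A * B - B * A) (3 : Fin 6) (1 : Fin 6) = 0 := by
    simp only [Matrix.sub_apply, Matrix.mul_apply, Fin.sum_univ_six]
    simp only [a10, a20, a21, a30, a31, a32, a40, a41, a42, a43, a50, a51, a52, a53, a54, b10, b20, b21, b30, b31, b32, b40, b41, b42, b43, b50, b51, b52, b53, b54, zA1, zA2, zA3, zA4, zB1, zB2, zB3, zB4,
      zero_mul, mul_zero, add_zero, zero_add]
    ring
  have hz32 : (A * B - B * A) (3 : Fin 6) (2 : Fin 6) = 0 := by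
    simp only [Matrix.sub_apply, Matrix.mul_apply, Fin.sum_univ_six]
    simp only [a10, a20, a21, a30, a31, a32, a40, a41, a42, a43, a50, a51, a52, a53, a54, b10, b20, b21, b30, b31, b32, b40, b41, b42, b43, b50, b51, b52, b53, b54, zA1, zA2, zA3, zA4, zB1, zB2, zB3, zB4,
      zero_mul, mul_zero, add_zero, zero_add]
    ring
  have hz33 : (A * B - B * A) (3 : Fin 6) (3 : Fin 6) = 0 := by
    simp only [Matrix.sub_apply, Matrix.mul_apply, Fin.sum_univ_six]
    simp only [a10, a20, a21, a30, a31, a32, a40, a41, a42, a43, a50, a51, a52, a53, a54, b10, b20, b21, b30, b31, b32, b40, b41, b42, b43, b50, b51, b52, b53, b54, zA1, zA2, zA3, zA4, zB1, zB2, zB3, zB4,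
      zero_mul, mul_zero, add_zero, zero_add]
    ring
  have hz40 : (A * B - B * A) (4 : Fin 6) (0 : Fin 6) = 0 := by
    simp only [Matrix.sub_apply, Matrix.mul_apply, Fin.sum_univ_six]
    simp only [a10, a20, a21, a30, a31, a32, a40, a41, a42, a43, a50, a51, a52, a53, a54, b10, b20, b21, b30, b31, b32, b40, b41, b42, b43, b50, b51, b52, b53, b54, zA1, zA2, zA3, zA4, zB1, zB2, zB3, zB4,
      zero_mul, mul_zero, add_zero, zero_add]
    ring
  have hz41 : (A * B - B * A) (4 : Fin 6) (1 : Fin 6) = 0 := by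
    simp only [Matrix.sub_apply, Matrix.mul_apply, Fin.sum_univ_six]
    simp only [a10, a20, a21, a30, a31, a32, a40, a41, a42, a43, a50, a51, a52, a53, a54, b10, b20, b21, b30, b31, b32, b40, b41, b42, b43, b50, b51, b52, b53, b54, zA1, zA2, zA3, zA4, zB1, zB2, zB3, zB4,
      zero_mul, mul_zero, add_zero, zero_add]
    ring
  have hz42 : (A * B - B * A) (4 : Fin 6) (2 : Fin 6) = 0 := by
    simp only [Matrix.sub_apply, Matrix.mul_apply, Fin.sum_univ_six]
    simp only [a10, a20, a21, a30, a31, a32, a40, a41, a42, a43, a50, a51, a52, a53, a54, b10, b20, b21, b30, b31, b32, b40, b41, b42, b43, b50, b51, b52, b53, b54, zA1, zA2, zA3, zA4, zB1, zB2, zB3, zB4,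
      zero_mul, mul_zero, add_zero, zero_add]
    ring
  have hz43 : (A * B - B * A) (4 : Fin 6) (3 : Fin 6) = 0 := by
    simp only [Matrix.sub_apply, Matrix.mul_apply, Fin.sum_univ_six]
    simp only [a10, a20, a21, a30, a31, a32, a40, a41, a42, a43, a50, a51, a52, a53, a54, b10, b20, b21, b30, b31, b32, b40, b41, b42, b43, b50, b51, b52, b53, b54, zA1, zA2, zA3, zA4, zB1, zB2, zB3, zB4,
      zero_mul, mul_zero, add_zero, zero_add]
    ring
  have hz44 : (A * B - B * A) (4 : Fin 6) (4 : Fin 6) = 0 := by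
    simp only [Matrix.sub_apply, Matrix.mul_apply, Fin.sum_univ_six]
    simp only [a10, a20, a21, a30, a31, a32, a40, a41, a42, a43, a50, a51, a52, a53, a54, b10, b20, b21, b30, b31, b32, b40, b41, b42, b43, b50, b51, b52, b53, b54, zA1, zA2, zA3, zA4, zB1, zB2, zB3, zB4,
      zero_mul, mul_zero, add_zero, zero_add]
    ring
  have hz50 : (A * B - B * A) (5 : Fin 6) (0 : Fin 6) = 0 := by
    simp only [Matrix.sub_apply, Matrix.mul_apply, Fin.sum_univ_six]
    simp only [a10, a20, a21, a30, a31, a32, a40, a41, a42, a43, a50, a51, a52, a53, a54, b10, b20, b21, b30, b31, b32, b40, b41, b42, b43, b50, b51, b52, b53, b54, zA1, zA2, zA3, zA4, zB1, zB2, zB3, zB4,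
      zero_mul, mul_zero, add_zero, zero_add]
    ring
  have hz51 : (A * B - B * A) (5 : Fin 6) (1 : Fin 6) = 0 := by
    simp only [Matrix.sub_apply, Matrix.mul_apply, Fin.sum_univ_six]
    simp only [a10, a20, a21, a30, a31, a32, a40, a41, a42, a43, a50, a51, a52, a53, a54, b10, b20, b21, b30, b31, b32, b40, b41, b42, b43, b50, b51, b52, b53, b54, zA1, zA2, zA3, zA4, zB1, zB2, zB3, zB4,
      zero_mul, mul_zero, add_zero, zero_add]
    ring
  have hz52 : (A * B - B * A) (5 : Fin 6) (2 : Fin 6) = 0 := by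
    simp only [Matrix.sub_apply, Matrix.mul_apply, Fin.sum_univ_six]
    simp only [a10, a20, a21, a30, a31, a32, a40, a41, a42, a43, a50, a51, a52, a53, a54, b10, b20, b21, b30, b31, b32, b40, b41, b42, b43, b50, b51, b52, b53, b54, zA1, zA2, zA3, zA4, zB1, zB2, zB3, zB4,
      zero_mul, mul_zero, add_zero, zero_add]
    ring
  have hz53 : (A * B - B * A) (5 : Fin 6) (3 : Fin 6) = 0 := by
    simp only [Matrix.sub_apply, Matrix.mul_apply, Fin.sum_univ_six]
    simp only [a10, a20, a21, a30, a31, a32, a40, a41, a42, a43, a50, a51, a52, a53, a54, b10, b20, b21, b30, b31, b32, b40, b41, b42, b43, b50, b51, b52, b53, b54, zA1, zA2, zA3, zA4, zB1, zB2, zB3, zB4,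
      zero_mul, mul_zero, add_zero, zero_add]
    ring
  have hz54 : (A * B - B * A) (5 : Fin 6) (4 : Fin 6) = 0 := by
    simp only [Matrix.sub_apply, Matrix.mul_apply, Fin.sum_univ_six]
    simp only [a10, a20, a21, a30, a31, a32, a40, a41, a42, a43, a50, a51, a52, a53, a54, b10, b20, b21, b30, b31, b32, b40, b41, b42, b43, b50, b51, b52, b53, b54, zA1, zA2, zA3, zA4, zB1, zB2, zB3, zB4,
      zero_mul, mul_zero, add_zero, zero_add]
    ring
  have hz55 : (A * B - B * A) (5 : Fin 6) (5 : Fin 6) = 0 := by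
    simp only [Matrix.sub_apply, Matrix.mul_apply, Fin.sum_univ_six]
    simp only [a10, a20, a21, a30, a31, a32, a40, a41, a42, a43, a50, a51, a52, a53, a54, b10, b20, b21, b30, b31, b32, b40, b41, b42, b43, b50, b51, b52, b53, b54, zA1, zA2, zA3, zA4, zB1, zB2, zB3, zB4,
      zero_mul, mul_zero, add_zero, zero_add]
    ring
  intro i j h
  fin_cases i <;> fin_cases j <;> first
    | exact absurd (by decide) h
    | assumption

lemma trip {F : Type*} [Field F] {K1 K2 K3 : Matrix (Fin 6) (Fin 6) F}
    (h1 : ∀ i j : Fin 6, ¬ okS i j → K1 i j = 0)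
    (h2 : ∀ i j : Fin 6, ¬ okS i j → K2 i j = 0)
    (h3 : ∀ i j : Fin 6, ¬ okS i j → K3 i j = 0)
    (i j : Fin 6) (hij : ¬ (i = 0 ∧ j = 5)) : (K1 * K2 * K3) i j = 0 := by
  rw [Matrix.mul_apply]
  refine Finset.sum_eq_zero fun l _ => ?_
  rw [Matrix.mul_apply, Finset.sum_mul]
  refine Finset.sum_eq_zero fun k _ => ?_
  by_cases o1 : okS i k
  · by_cases o2 : okS k l
    · by_cases o3 : okS l j
      · exact absurd (okS_chain i k l j o1 o2 o3) hij
      · rw [h3 l j o3, mul_zero]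
    · rw [h2 k l o2, mul_zero, zero_mul]
  · rw [h1 i k o1, zero_mul, zero_mul]

lemma e05_central {F : Type*} [Field F] (c : F) {X : Matrix (Fin 6) (Fin 6) F}
    (hX : memN X) :
    Matrix.single 0 5 c * X = X * Matrix.single 0 5 c := by
  obtain ⟨tX, dX1, dX2, dX3, zX1, zX2, zX3, zX4⟩ := hX
  have x10 : X 1 0 = 0 := tX 1 0 (by decide)
  have x20 : X 2 0 = 0 := tX 2 0 (by decide)
  have x21 : X 2 1 = 0 := tX 2 1 (by decide)
  have x30 : X 3 0 = 0 := tX 3 0 (by decide)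
  have x31 : X 3 1 = 0 := tX 3 1 (by decide)
  have x32 : X 3 2 = 0 := tX 3 2 (by decide)
  have x40 : X 4 0 = 0 := tX 4 0 (by decide)
  have x41 : X 4 1 = 0 := tX 4 1 (by decide)
  have x42 : X 4 2 = 0 := tX 4 2 (by decide)
  have x43 : X 4 3 = 0 := tX 4 3 (by decide)
  have x50 : X 5 0 = 0 := tX 5 0 (by decide)
  have x51 : X 5 1 = 0 := tX 5 1 (by decide)
  have x52 : X 5 2 = 0 := tX 5 2 (by decide)
  have x53 : X 5 3 = 0 := tX 5 3 (by decide)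
  have x54 : X 5 4 = 0 := tX 5 4 (by decide)
  ext i j
  simp only [Matrix.mul_apply, Matrix.single, Matrix.of_apply, Fin.sum_univ_six]
  fin_cases i <;> fin_cases j <;>
    simp [x10, x20, x21, x30, x31, x32, x40, x41, x42, x43, x50, x51, x52, x53, x54, dX1, mul_comm]


def wD {F : Type*} [Field F] : Matrix (Fin 6) (Fin 6) F :=
  single 0 0 1 + single 5 5 1
def wA2 {F : Type*} [Field F] : Matrix (Fin 6) (Fin 6) F :=
  single 0 1 1 + single 4 5 1
def wA3 {F : Type*} [Field F] : Matrix (Fin 6) (Fin 6) F :=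
  single 1 1 1 + single 4 4 1
def wA4 {F : Type*} [Field F] : Matrix (Fin 6) (Fin 6) F :=
  single 1 2 1 + single 3 4 1
def wA5 {F : Type*} [Field F] : Matrix (Fin 6) (Fin 6) F :=
  single 0 3 1 + single 2 5 1

lemma memN_wD {F : Type*} [Field F] : memN (wD (F := F)) := by
  refine ⟨fun i j hij => ?_, ?_, ?_, ?_, ?_, ?_, ?_, ?_⟩ <;>
    first
    | (fin_cases i <;> fin_cases j <;>
        first
        | exact absurd hij (by decide)
        | simp (config := { decide := true }) [wD, Matrix.single])
    | simp (config := { decide := true }) [wD, Matrix.single]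

lemma memN_wA2 {F : Type*} [Field F] : memN (wA2 (F := F)) := by
  refine ⟨fun i j hij => ?_, ?_, ?_, ?_, ?_, ?_, ?_, ?_⟩ <;>
    first
    | (fin_cases i <;> fin_cases j <;>
        first
        | exact absurd hij (by decide)
        | simp (config := { decide := true }) [wA2, Matrix.single])
    | simp (config := { decide := true }) [wA2, Matrix.single]

lemma memN_wA3 {F : Type*} [Field F] : memN (wA3 (F := F)) := by
  refine ⟨fun i j hij => ?_, ?_, ?_, ?_, ?_, ?_, ?_, ?_⟩ <;>
    first
    | (fin_cases i <;> fin_cases j <;>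
        first
        | exact absurd hij (by decide)
        | simp (config := { decide := true }) [wA3, Matrix.single])
    | simp (config := { decide := true }) [wA3, Matrix.single]

lemma memN_wA4 {F : Type*} [Field F] : memN (wA4 (F := F)) := by
  refine ⟨fun i j hij => ?_, ?_, ?_, ?_, ?_, ?_, ?_, ?_⟩ <;>
    first
    | (fin_cases i <;> fin_cases j <;>
        first
        | exact absurd hij (by decide)
        | simp (config := { decide := true }) [wA4, Matrix.single])
    | simp (config := { decide := true }) [wA4, Matrix.single]

lemma memN_wA5 {F : Type*} [Field F] : memN (wA5 (F := F)) := by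
  refine ⟨fun i j hij => ?_, ?_, ?_, ?_, ?_, ?_, ?_, ?_⟩ <;>
    first
    | (fin_cases i <;> fin_cases j <;>
        first
        | exact absurd hij (by decide)
        | simp (config := { decide := true }) [wA5, Matrix.single])
    | simp (config := { decide := true }) [wA5, Matrix.single]

lemma refl_wD {F : Type*} [Field F] : reflInv (wD (F := F)) = wD := by
  ext i j
  fin_cases i <;> fin_cases j <;>
    simp (config := { decide := true }) [reflInv, wD, Matrix.single]

lemma refl_wA2 {F : Type*} [Field F] : reflInv (wA2 (F := F)) = wA2 := by
  ext i j
  fin_cases i <;> fin_cases j <;>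
    simp (config := { decide := true }) [reflInv, wA2, Matrix.single]

lemma refl_wA3 {F : Type*} [Field F] : reflInv (wA3 (F := F)) = wA3 := by
  ext i j
  fin_cases i <;> fin_cases j <;>
    simp (config := { decide := true }) [reflInv, wA3, Matrix.single]

lemma refl_wA4 {F : Type*} [Field F] : reflInv (wA4 (F := F)) = wA4 := by
  ext i j
  fin_cases i <;> fin_cases j <;>
    simp (config := { decide := true }) [reflInv, wA4, Matrix.single]

lemma refl_wA5 {F : Type*} [Field F] : reflInv (wA5 (F := F)) = wA5 := by
  ext i j
  fin_cases i <;> fin_cases j <;>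
    simp (config := { decide := true }) [reflInv, wA5, Matrix.single]

lemma prod_w {F : Type*} [Field F] :
    (wD * wA2 - wA2 * wD : Matrix (Fin 6) (Fin 6) F) * (wA3 * wA4 - wA4 * wA3) *
      (wA5 * wD - wD * wA5) = Matrix.single 0 5 (1 : F) := by
  have e1 : (wD * wA2 - wA2 * wD : Matrix (Fin 6) (Fin 6) F) =
      single 0 1 1 - single 4 5 1 := by
    simp (config := { decide := true }) [wD, wA2, mul_add, add_mul]
  have e2 : (wA3 * wA4 - wA4 * wA3 : Matrix (Fin 6) (Fin 6) F) =
      single 1 2 1 - single 3 4 1 := by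
    simp (config := { decide := true }) [wA3, wA4, mul_add, add_mul]
  have e3 : (wA5 * wD - wD * wA5 : Matrix (Fin 6) (Fin 6) F) =
      single 2 5 1 - single 0 3 1 := by
    simp (config := { decide := true }) [wA5, wD, mul_add, add_mul]
  rw [e1, e2, e3]
  simp (config := { decide := true }) [sub_mul, mul_sub]


/-- `[x₁⁺,x₂⁺][x₃⁺,x₄⁺][x₅⁺,x₆⁺]` is a proper central `*`-polynomial
for `(N, θ_6)`: every such product of commutators of symmetric elements of `N` is
central in `N`, and some evaluation equals the nonzero central element `e_{16}`. -/
theorem stmt_10 (F : Type*) [Field F] [CharZero F] :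
    (∀ A₁ A₂ A₃ A₄ A₅ A₆ : Matrix (Fin 6) (Fin 6) F,
      memN A₁ → memN A₂ → memN A₃ → memN A₄ → memN A₅ → memN A₆ →
      reflInv A₁ = A₁ → reflInv A₂ = A₂ → reflInv A₃ = A₃ →
      reflInv A₄ = A₄ → reflInv A₅ = A₅ → reflInv A₆ = A₆ →
      ∀ X : Matrix (Fin 6) (Fin 6) F, memN X →
        ((A₁ * A₂ - A₂ * A₁) * (A₃ * A₄ - A₄ * A₃) * (A₅ * A₆ - A₆ * A₅)) * X =
        X * ((A₁ * A₂ - A₂ * A₁) * (A₃ * A₄ - A₄ * A₃) * (A₅ * A₆ - A₆ * A₅))) ∧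
    (∃ A₁ A₂ A₃ A₄ A₅ A₆ : Matrix (Fin 6) (Fin 6) F,
      memN A₁ ∧ memN A₂ ∧ memN A₃ ∧ memN A₄ ∧ memN A₅ ∧ memN A₆ ∧
      reflInv A₁ = A₁ ∧ reflInv A₂ = A₂ ∧ reflInv A₃ = A₃ ∧
      reflInv A₄ = A₄ ∧ reflInv A₅ = A₅ ∧ reflInv A₆ = A₆ ∧
      (A₁ * A₂ - A₂ * A₁) * (A₃ * A₄ - A₄ * A₃) * (A₅ * A₆ - A₆ * A₅) =
        Matrix.single 0 5 (1 : F)) ∧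
    Matrix.single 0 5 (1 : F) ≠ (0 : Matrix (Fin 6) (Fin 6) F) := by
  refine ⟨?_, ⟨wD, wA2, wA3, wA4, wA5, wD, memN_wD, memN_wA2, memN_wA3, memN_wA4,
    memN_wA5, memN_wD, refl_wD, refl_wA2, refl_wA3, refl_wA4, refl_wA5, refl_wD, prod_w⟩, ?_⟩
  · intro A₁ A₂ A₃ A₄ A₅ A₆ h1 h2 h3 h4 h5 h6 _ _ _ _ _ _ X hX
    have hP : ∀ i j : Fin 6, ¬(i = 0 ∧ j = 5) →
        ((A₁ * A₂ - A₂ * A₁) * (A₃ * A₄ - A₄ * A₃) * (A₅ * A₆ - A₆ * A₅)) i j = 0 :=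
      fun i j => trip (comm_ok h1 h2) (comm_ok h3 h4) (comm_ok h5 h6) i j
    have hEq : (A₁ * A₂ - A₂ * A₁) * (A₃ * A₄ - A₄ * A₃) * (A₅ * A₆ - A₆ * A₅) =
        Matrix.single 0 5
          (((A₁ * A₂ - A₂ * A₁) * (A₃ * A₄ - A₄ * A₃) * (A₅ * A₆ - A₆ * A₅)) 0 5) := by
      ext i j
      by_cases hc : i = 0 ∧ j = 5
      · obtain ⟨rfl, rfl⟩ := hc
        simp [Matrix.single]
      · rw [hP i j hc]
        simp only [Matrix.single, Matrix.of_apply]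
        rw [if_neg]
        rintro ⟨rfl, rfl⟩
        exact hc ⟨rfl, rfl⟩
    rw [hEq]
    exact e05_central _ hX
  · intro h
    have h2 := congrFun (congrFun h 0) 5
    simp [Matrix.single] at h2
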